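/- arXiv:2506.13347 — 2 statements merged into one kernel-verified Lean document; each statement's English description precedes it below -/
import Mathlib

section
/- Let f : [0,∞) → ℝ be continuously differentiable with f(t)/t → ω as t → ∞ and sup_{s≥1}|f'(s)| < ∞. Then for every integer k ≥ 1, lim_{t→∞} (1/t^{k+1}) ∫₁ᵗ s^k f'(s) ds = ω/(k+1). -/
open Filter intervalIntegral MeasureTheory

/-- Averaging lemma: if `g` is continuous and `g s / s^k → c`, then
`(1/t^{k+1}) ∫₁ᵗ g → c/(k+1)`. -/
lemma avg_lemma (g : ℝ → ℝ) (hg : Continuous g) (k : ℕ) (c : ℝ)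
    (h : Tendsto (fun s => g s / s ^ k) atTop (nhds c)) :
    Tendsto (fun t => (1 / t ^ (k + 1)) * ∫ s in (1:ℝ)..t, g s) atTop
      (nhds (c / (k + 1))) := by
  set e : ℝ → ℝ := fun s => g s - c * s ^ k with he
  have hec : Continuous e := hg.sub (by continuity)
  have hk1 : (0:ℝ) < (k:ℝ) + 1 := by positivity
  -- main claim: ∫₁ᵗ e / t^{k+1} → 0
  have key : Tendsto (fun t => (∫ s in (1:ℝ)..t, e s) / t ^ (k + 1)) atTop (nhds 0) := by
    rw [NormedAddCommGroup.tendsto_nhds_zero]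
    intro ε hε
    have h2 : Tendsto (fun s => g s / s ^ k - c) atTop (nhds 0) := by
      simpa using h.sub_const c
    rw [NormedAddCommGroup.tendsto_nhds_zero] at h2
    obtain ⟨T₀, hT₀⟩ := (h2 (ε / 2) (by positivity)).exists_forall_of_atTop
    set T : ℝ := max T₀ 1 with hT
    have hT1 : (1:ℝ) ≤ T := le_max_right _ _
    have hbound : ∀ s ≥ T, |e s| ≤ ε / 2 * s ^ k := by
      intro s hs
      have hs1 : (1:ℝ) ≤ s := le_trans hT1 hs
      have hsk : (0:ℝ) < s ^ k := by positivity
      have : e s = (g s / s ^ k - c) * s ^ k := by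
        field_simp [he]
        ring
      rw [this, abs_mul, abs_of_pos hsk]
      have := hT₀ s (le_trans (le_max_left _ _) hs)
      rw [Real.norm_eq_abs] at this
      exact mul_le_mul_of_nonneg_right this.le hsk.le
    set C : ℝ := |∫ s in (1:ℝ)..T, e s| with hC
    have hCt : Tendsto (fun t : ℝ => C / t ^ (k + 1)) atTop (nhds 0) :=
      tendsto_const_nhds.div_atTop (tendsto_pow_atTop (Nat.succ_ne_zero k))
    rw [NormedAddCommGroup.tendsto_nhds_zero] at hCt
    filter_upwards [hCt (ε / 2) (by positivity), eventually_ge_atTop T] with t htC htT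
    have ht1 : (1:ℝ) ≤ t := le_trans hT1 htT
    have htk : (0:ℝ) < t ^ (k + 1) := by positivity
    have hint1 : IntervalIntegrable e volume 1 T := hec.intervalIntegrable _ _
    have hint2 : IntervalIntegrable e volume T t := hec.intervalIntegrable _ _
    have hsplit : (∫ s in (1:ℝ)..t, e s)
        = (∫ s in (1:ℝ)..T, e s) + ∫ s in T..t, e s :=
      (integral_add_adjacent_intervals hint1 hint2).symm
    have habs : |∫ s in T..t, e s| ≤ ε / 2 * t ^ (k + 1) := by
      calc |∫ s in T..t, e s| ≤ ∫ s in T..t, |e s| :=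
            intervalIntegral.abs_integral_le_integral_abs htT
        _ ≤ ∫ s in T..t, ε / 2 * s ^ k := by
            apply intervalIntegral.integral_mono_on htT
              (hec.abs.intervalIntegrable _ _) (by apply Continuous.intervalIntegrable; continuity)
            intro s hs
            exact hbound s hs.1
        _ = ε / 2 * ((t ^ (k + 1) - T ^ (k + 1)) / (k + 1)) := by
            rw [intervalIntegral.integral_const_mul, integral_pow]
        _ ≤ ε / 2 * t ^ (k + 1) := by
            apply mul_le_mul_of_nonneg_left _ (by positivity)
            rw [div_le_iff₀ hk1]
            nlinarith [pow_pos (lt_of_lt_of_le zero_lt_one hT1) (k+1), pow_pos (lt_of_lt_of_le zero_lt_one ht1) (k+1)]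
    have : |∫ s in (1:ℝ)..t, e s| ≤ C + ε / 2 * t ^ (k + 1) := by
      rw [hsplit]
      exact le_trans (abs_add_le _ _) (add_le_add le_rfl habs)
    rw [Real.norm_eq_abs, abs_div, abs_of_pos htk, div_lt_iff₀ htk]
    rw [Real.norm_eq_abs, abs_div, abs_of_pos htk, div_lt_iff₀ htk, hC] at htC
    calc |∫ s in (1:ℝ)..t, e s| ≤ C + ε / 2 * t ^ (k + 1) := this
      _ < ε / 2 * t ^ (k + 1) + ε / 2 * t ^ (k + 1) := by
          rw [abs_abs] at htC
          linarith
      _ = ε * t ^ (k + 1) := by ring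
  -- decompose the integral
  have hdecomp : ∀ t : ℝ, 1 ≤ t →
      (1 / t ^ (k + 1)) * ∫ s in (1:ℝ)..t, g s
        = (∫ s in (1:ℝ)..t, e s) / t ^ (k + 1)
          + c * ((t ^ (k + 1) - 1) / (k + 1)) / t ^ (k + 1) := by
    intro t ht
    have h1 : (∫ s in (1:ℝ)..t, g s)
        = (∫ s in (1:ℝ)..t, e s) + c * ((t ^ (k + 1) - 1) / (k + 1)) := by
      have : (∫ s in (1:ℝ)..t, g s)
          = (∫ s in (1:ℝ)..t, e s) + ∫ s in (1:ℝ)..t, c * s ^ k := by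
        rw [← intervalIntegral.integral_add (hec.intervalIntegrable _ _)
          (by apply Continuous.intervalIntegrable; continuity)]
        congr 1; ext s; simp [he]
      rw [this, intervalIntegral.integral_const_mul, integral_pow]
      norm_num
    rw [h1]; ring
  have h2 : Tendsto (fun t : ℝ => c * ((t ^ (k + 1) - 1) / (k + 1)) / t ^ (k + 1))
      atTop (nhds (c / (k + 1))) := by
    have hpow : Tendsto (fun t : ℝ => (1:ℝ) / t ^ (k+1)) atTop (nhds 0) :=
      tendsto_const_nhds.div_atTop (tendsto_pow_atTop (Nat.succ_ne_zero k))
    have heq : ∀ᶠ t : ℝ in atTop,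
        c / (k + 1) * (1 - 1 / t ^ (k + 1))
          = c * ((t ^ (k + 1) - 1) / (k + 1)) / t ^ (k + 1) := by
      filter_upwards [eventually_ge_atTop (1:ℝ)] with t ht
      have htk : (0:ℝ) < t ^ (k + 1) := by positivity
      field_simp
    have : Tendsto (fun t : ℝ => c / (k + 1) * (1 - 1 / t ^ (k + 1))) atTop
        (nhds (c / (k + 1))) := by
      have := (tendsto_const_nhds (x := c / ((k:ℝ) + 1))).mul
        ((tendsto_const_nhds (x := (1:ℝ))).sub hpow)
      simpa using this
    exact this.congr' heq
  have := key.add h2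
  rw [zero_add] at this
  apply this.congr'
  filter_upwards [eventually_ge_atTop (1:ℝ)] with t ht
  exact (hdecomp t ht).symm

/-- If `f(t)/t → ω` and `f'` is bounded on `[1,∞)`, then for every `k ≥ 1`,
`(1/t^{k+1}) ∫₁ᵗ s^k f'(s) ds → ω/(k+1)`. -/
theorem power_weighted_derivative_integral_asymptotics
    (f : ℝ → ℝ) (hf : ContDiff ℝ 1 f) (ω : ℝ)
    (hasymp : Tendsto (fun t => f t / t) atTop (nhds ω))
    (hbdd : ∃ M, ∀ s ≥ (1:ℝ), |deriv f s| ≤ M) :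
    ∀ k : ℕ, 1 ≤ k →
      Tendsto (fun t => (1 / t ^ (k + 1)) * ∫ s in (1:ℝ)..t, s ^ k * deriv f s)
        atTop (nhds (ω / (k + 1))) := by
  intro k hk
  have hfd : Differentiable ℝ f := hf.differentiable one_ne_zero
  have hfc : Continuous f := hfd.continuous
  have hdc : Continuous (deriv f) := hf.continuous_deriv le_rfl
  -- integration by parts
  have hibp : ∀ t : ℝ, (∫ s in (1:ℝ)..t, s ^ k * deriv f s)
      = t ^ k * f t - 1 * f 1 - ∫ s in (1:ℝ)..t, (k * s ^ (k - 1)) * f s := by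
    intro t
    have := intervalIntegral.integral_mul_deriv_eq_deriv_mul
      (u := fun s : ℝ => s ^ k) (u' := fun s : ℝ => k * s ^ (k - 1))
      (v := f) (v' := deriv f) (a := 1) (b := t)
      (fun x _ => hasDerivAt_pow k x)
      (fun x _ => (hfd x).hasDerivAt)
      (by apply Continuous.intervalIntegrable; continuity)
      (hdc.intervalIntegrable _ _)
    simpa using this
  -- average lemma for g s = k * s^(k-1) * f s
  have havg : Tendsto (fun t => (1 / t ^ (k + 1)) *
      ∫ s in (1:ℝ)..t, (k * s ^ (k - 1)) * f s) atTop (nhds (k * ω / (k + 1))) := by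
    apply avg_lemma _ (by continuity)
    apply Tendsto.congr' _ ((tendsto_const_nhds (x := (k:ℝ))).mul hasymp)
    filter_upwards [eventually_ge_atTop (1:ℝ)] with s hs
    have hs0 : (0:ℝ) < s := lt_of_lt_of_le zero_lt_one hs
    have hsk : s ^ k = s ^ (k - 1) * s := by
      rw [← pow_succ]
      congr 1
      omega
    rw [hsk]
    field_simp
  -- remaining terms
  have h1 : Tendsto (fun t : ℝ => t ^ k * f t / t ^ (k + 1)) atTop (nhds ω) := by
    apply hasymp.congr'
    filter_upwards [eventually_ge_atTop (1:ℝ)] with t ht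
    have ht0 : (0:ℝ) < t := lt_of_lt_of_le zero_lt_one ht
    rw [pow_succ]
    field_simp
  have h2 : Tendsto (fun t : ℝ => 1 * f 1 / t ^ (k + 1)) atTop (nhds 0) :=
    tendsto_const_nhds.div_atTop (tendsto_pow_atTop (Nat.succ_ne_zero k))
  have hfinal := (h1.sub h2).sub havg
  rw [sub_zero] at hfinal
  have : ω - k * ω / (k + 1) = ω / (k + 1) := by
    have : ((k:ℝ) + 1) ≠ 0 := by positivity
    field_simp
    ring
  rw [this] at hfinal
  apply hfinal.congr'
  filter_upwards [eventually_ge_atTop (1:ℝ)] with t ht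
  have ht0 : (0:ℝ) < t ^ (k + 1) := by positivity
  rw [hibp t]
  field_simp
end

section
/- Let φ_i : [0,∞) → ℝ, i = 1,…,k, be C¹ functions with bounded derivatives on [1,∞) and φ_i(t)/t → ω_i as t → ∞. Define m_k(t) = ∫_{Δ_k(t)} φ₁'(t₁) ⋯ φ_k'(t_k) dt₁⋯dt_k over the simplex Δ_k(t) = {0 ≤ t₁ ≤ ⋯ ≤ t_k ≤ t}. Then lim_{t→∞} m_k(t)/t^k = (ω₁ ⋯ ω_k)/k!. -/
open Filter MeasureTheory intervalIntegral

lemma subst_identity (F : ℝ → ℝ) (k : ℕ) {t : ℝ} (ht : 0 < t) :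
    (∫ s in (0:ℝ)..t, F s) / t ^ (k+1) = ∫ u in Set.Ioc (0:ℝ) 1, F (t*u) / t ^ k := by
  have h1 : (∫ u in (0:ℝ)..1, F (t*u)) = t⁻¹ • ∫ s in (0:ℝ)..t, F s := by
    rw [integral_comp_mul_left F ht.ne']
    norm_num
  have h2 : (∫ u in (0:ℝ)..1, F (t*u) / t^k) = (∫ u in (0:ℝ)..1, F (t*u)) / t^k :=
    integral_div _ _
  rw [← intervalIntegral.integral_of_le (zero_le_one), h2, h1, smul_eq_mul]
  rw [pow_succ]
  rw [inv_mul_eq_div, div_div, mul_comm]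

lemma lemB (k : ℕ) (hk : 1 ≤ k) (φ : ℝ → ℝ) (ω A M : ℝ) (hA : 0 ≤ A) (hM : 0 ≤ M)
    (hφc : Continuous φ)
    (hφb : ∀ s, 0 ≤ s → |φ s| ≤ A + M * s)
    (hφω : Tendsto (fun t => φ t / t) atTop (nhds ω)) :
    Tendsto (fun t => (∫ s in (0:ℝ)..t, φ s * s ^ (k-1)) / t ^ (k+1)) atTop
      (nhds (ω / (k+1))) := by
  set F : ℝ → ℝ := fun s => φ s * s ^ (k-1) with hF
  have key : Tendsto (fun t => ∫ u in Set.Ioc (0:ℝ) 1, F (t*u) / t ^ k) atTop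
      (nhds (ω / (k+1))) := by
    have hlim : (∫ u in Set.Ioc (0:ℝ) 1, ω * u ^ k) = ω / (k+1) := by
      rw [← intervalIntegral.integral_of_le zero_le_one]
      simp [intervalIntegral.integral_const_mul, integral_pow]
      ring
    rw [← hlim]
    apply MeasureTheory.tendsto_integral_filter_of_dominated_convergence (fun _ => A + M)
    · filter_upwards [eventually_ge_atTop (1:ℝ)] with t ht
      exact ((hφc.comp (continuous_const.mul continuous_id)).mul
        ((continuous_const.mul continuous_id).pow _)).div_const _ |>.aestronglyMeasurable
    · filter_upwards [eventually_ge_atTop (1:ℝ)] with t ht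
      rw [ae_restrict_iff' measurableSet_Ioc]
      filter_upwards with u hu
      obtain ⟨hu0, hu1⟩ := hu
      have ht0 : (0:ℝ) < t := lt_of_lt_of_le one_pos ht
      have htu0 : 0 ≤ t * u := le_of_lt (mul_pos ht0 hu0)
      have h1 : |F (t*u)| ≤ (A + M * t) * t ^ (k-1) := by
        rw [hF]
        calc |φ (t*u) * (t*u) ^ (k-1)| = |φ (t*u)| * (t*u) ^ (k-1) := by
              rw [abs_mul, abs_pow, abs_of_nonneg htu0]
          _ ≤ (A + M * (t*u)) * (t*u) ^ (k-1) := by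
              apply mul_le_mul_of_nonneg_right (hφb _ htu0) (pow_nonneg htu0 _)
          _ ≤ (A + M * t) * t ^ (k-1) := by
              have h2 : t * u ≤ t := by nlinarith
              have h3 : A + M * (t*u) ≤ A + M * t := by nlinarith
              exact mul_le_mul h3 (pow_le_pow_left₀ htu0 h2 _) (pow_nonneg htu0 _)
                (by nlinarith)
      have hnorm : ‖F (t*u) / t ^ k‖ = |F (t*u)| / t ^ k := by
        rw [Real.norm_eq_abs, abs_div, abs_pow, abs_of_pos ht0]
      rw [hnorm]
      have htk : t ^ k = t ^ (k-1) * t := by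
        rw [← pow_succ]
        congr 1
        omega
      rw [div_le_iff₀ (pow_pos ht0 _)]
      calc |F (t*u)| ≤ (A + M * t) * t ^ (k-1) := h1
        _ ≤ (A + M) * t ^ k := by
            rw [htk, ← mul_assoc]
            nlinarith [mul_nonneg (mul_nonneg hA (sub_nonneg.mpr ht)) (pow_nonneg ht0.le (k-1))]
    · exact integrableOn_const measure_Ioc_lt_top.ne
    · rw [ae_restrict_iff' measurableSet_Ioc]
      filter_upwards with u hu
      obtain ⟨hu0, hu1⟩ := hu
      have h1 : Tendsto (fun t : ℝ => t * u) atTop atTop :=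
        Tendsto.atTop_mul_const hu0 tendsto_id
      have h2 : Tendsto (fun t : ℝ => φ (t*u) / (t*u)) atTop (nhds ω) :=
        hφω.comp h1
      have h3 : Tendsto (fun t : ℝ => φ (t*u) / (t*u) * u ^ k) atTop (nhds (ω * u ^ k)) :=
        h2.mul_const _
      apply h3.congr'
      filter_upwards [eventually_gt_atTop (0:ℝ)] with t ht
      have htu : (0:ℝ) < t * u := mul_pos ht hu0
      rw [hF]
      have : (t*u) ^ k = (t*u) ^ (k-1) * (t*u) := by
        rw [← pow_succ]; congr 1; omega
      field_simp
      rw [show (t*u) * φ (t*u) * (t*u) ^ (k-1) = φ (t*u) * (t*u) ^ k by rw [this]; ring, mul_pow]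
      ring
  apply key.congr'
  filter_upwards [eventually_gt_atTop (0:ℝ)] with t ht
  exact (subst_identity F k ht).symm

lemma lemC (k : ℕ) (ψ e : ℝ → ℝ) (M B : ℝ) (hM : 0 ≤ M) (hB : 0 ≤ B)
    (hψc : Continuous ψ) (hψM : ∀ s, 0 ≤ s → |ψ s| ≤ M)
    (hec : ContinuousOn e (Set.Ici 0))
    (heB : ∀ s, 0 ≤ s → |e s| ≤ B * s ^ k)
    (he0 : Tendsto (fun s => e s / s ^ k) atTop (nhds 0)) :
    Tendsto (fun t => (∫ s in (0:ℝ)..t, ψ s * e s) / t ^ (k+1)) atTop (nhds 0) := by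
  set F : ℝ → ℝ := fun s => ψ s * e s with hFdef
  have key : Tendsto (fun t => ∫ u in Set.Ioc (0:ℝ) 1, F (t*u) / t ^ k) atTop
      (nhds (∫ u in Set.Ioc (0:ℝ) 1, (0:ℝ))) := by
    apply MeasureTheory.tendsto_integral_filter_of_dominated_convergence (fun _ => M * B)
    · filter_upwards [eventually_ge_atTop (1:ℝ)] with t ht
      have ht0 : (0:ℝ) < t := lt_of_lt_of_le one_pos ht
      apply ContinuousOn.aestronglyMeasurable _ measurableSet_Ioc
      apply ContinuousOn.div_const
      apply ContinuousOn.mul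
      · exact (hψc.comp (continuous_const.mul continuous_id)).continuousOn
      · apply hec.comp ((continuous_const.mul continuous_id).continuousOn)
        intro u hu
        exact le_of_lt (mul_pos ht0 hu.1)
    · filter_upwards [eventually_ge_atTop (1:ℝ)] with t ht
      rw [ae_restrict_iff' measurableSet_Ioc]
      filter_upwards with u hu
      obtain ⟨hu0, hu1⟩ := hu
      have ht0 : (0:ℝ) < t := lt_of_lt_of_le one_pos ht
      have htu0 : 0 ≤ t * u := le_of_lt (mul_pos ht0 hu0)
      have h1 : |F (t*u)| ≤ M * (B * (t*u) ^ k) := by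
        rw [hFdef, abs_mul]
        exact mul_le_mul (hψM _ htu0) (heB _ htu0) (abs_nonneg _)
          hM
      have hnorm : ‖F (t*u) / t ^ k‖ = |F (t*u)| / t ^ k := by
        rw [Real.norm_eq_abs, abs_div, abs_pow, abs_of_pos ht0]
      rw [hnorm, div_le_iff₀ (pow_pos ht0 _)]
      calc |F (t*u)| ≤ M * (B * (t*u) ^ k) := h1
        _ = M * B * u ^ k * t ^ k := by rw [mul_pow]; ring
        _ ≤ M * B * t ^ k := by
            have h5 : u ^ k ≤ 1 := pow_le_one₀ hu0.le hu1
            have h4 : M * B * u ^ k ≤ M * B := by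
              nlinarith [mul_nonneg (mul_nonneg hM hB) (sub_nonneg.mpr h5)]
            exact mul_le_mul_of_nonneg_right h4 (pow_nonneg ht0.le k)
    · exact integrableOn_const measure_Ioc_lt_top.ne
    · rw [ae_restrict_iff' measurableSet_Ioc]
      filter_upwards with u hu
      obtain ⟨hu0, hu1⟩ := hu
      have h1 : Tendsto (fun t : ℝ => t * u) atTop atTop :=
        Tendsto.atTop_mul_const hu0 tendsto_id
      have h2 : Tendsto (fun t : ℝ => M * |e (t*u) / (t*u) ^ k| * u ^ k) atTop (nhds 0) := by
        have := ((he0.comp h1).abs.const_mul M).mul_const (u ^ k)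
        simpa using this
      apply squeeze_zero_norm' _ h2
      filter_upwards [eventually_gt_atTop (0:ℝ)] with t ht
      have htu : (0:ℝ) < t * u := mul_pos ht hu0
      have htk : (0:ℝ) < t ^ k := pow_pos ht _
      rw [hFdef]
      have key2 : |e (t*u)| / t ^ k = |e (t*u) / (t*u) ^ k| * u ^ k := by
        rw [abs_div, abs_pow, abs_of_pos htu, div_mul_eq_mul_div, mul_pow]
        field_simp
      calc ‖ψ (t*u) * e (t*u) / t ^ k‖ = |ψ (t*u)| * |e (t*u)| / t ^ k := by
            rw [Real.norm_eq_abs, abs_div, abs_mul, abs_pow, abs_of_pos ht]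
        _ ≤ M * |e (t*u)| / t ^ k := by
            gcongr
            exact hψM _ htu.le
        _ = M * (|e (t*u)| / t ^ k) := by ring
        _ = M * |e (t*u) / (t*u) ^ k| * u ^ k := by rw [key2]; ring
  rw [MeasureTheory.integral_zero] at key
  apply key.congr'
  filter_upwards [eventually_gt_atTop (0:ℝ)] with t ht
  exact (subst_identity F k ht).symm

lemma keyLem (k : ℕ) (ψ φ g : ℝ → ℝ) (ω c M B : ℝ) (hM : 0 ≤ M) (hB : 0 ≤ B)
    (hψc : Continuous ψ) (hψM : ∀ s, 0 ≤ s → |ψ s| ≤ M)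
    (hφd : ∀ s, HasDerivAt φ (ψ s) s)
    (hφω : Tendsto (fun t => φ t / t) atTop (nhds ω))
    (hg : ContinuousOn g (Set.Ici 0))
    (hgB : ∀ s, 0 ≤ s → |g s| ≤ B * s ^ k)
    (hgc : Tendsto (fun s => g s / s ^ k) atTop (nhds c)) :
    Tendsto (fun t => (∫ s in (0:ℝ)..t, ψ s * g s) / t ^ (k+1)) atTop
      (nhds (c * ω / (k+1))) := by
  have hdiff : Differentiable ℝ φ := fun s => (hφd s).differentiableAt
  have hφc : Continuous φ := hdiff.continuous
  set A := |φ 0| with hA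
  have hφb : ∀ s, 0 ≤ s → |φ s| ≤ A + M * s := by
    intro s hs
    have h1 := Convex.norm_image_sub_le_of_norm_hasDerivWithin_le
      (f := φ) (f' := ψ) (C := M) (s := Set.Ici (0:ℝ))
      (fun x _ => (hφd x).hasDerivWithinAt)
      (fun x hx => by rw [Real.norm_eq_abs]; exact hψM x hx)
      (convex_Ici 0) Set.self_mem_Ici hs
    rw [Real.norm_eq_abs, Real.norm_eq_abs, sub_zero, abs_of_nonneg hs] at h1
    have h2 := abs_sub_abs_le_abs_sub (φ s) (φ 0)
    linarith
  -- part 1 : integration by parts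
  have hparts : ∀ t : ℝ, (∫ s in (0:ℝ)..t, s ^ k * ψ s)
      = t ^ k * φ t - 0 ^ k * φ 0 - ∫ s in (0:ℝ)..t, ((k:ℝ) * s ^ (k-1)) * φ s := by
    intro t
    apply intervalIntegral.integral_mul_deriv_eq_deriv_mul
    · intro x _; simpa using hasDerivAt_pow k x
    · intro x _; exact hφd x
    · exact (Continuous.intervalIntegrable (by continuity)) _ _
    · exact hψc.intervalIntegrable _ _
  have hk1 : ((k:ℝ) + 1) ≠ 0 := by positivity
  have hT1 : Tendsto (fun t => (∫ s in (0:ℝ)..t, ψ s * s ^ k) / t ^ (k+1)) atTop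
      (nhds (ω / (k+1))) := by
    have ha : Tendsto (fun t : ℝ => t ^ k * φ t / t ^ (k+1)) atTop (nhds ω) := by
      apply hφω.congr'
      filter_upwards [eventually_gt_atTop (0:ℝ)] with t ht
      rw [pow_succ]
      rw [eq_div_iff (by positivity)]
      field_simp
    have hb : Tendsto (fun t : ℝ => (0:ℝ) ^ k * φ 0 / t ^ (k+1)) atTop (nhds 0) :=
      Tendsto.div_atTop tendsto_const_nhds (tendsto_pow_atTop (Nat.succ_ne_zero k))
    have hc : Tendsto (fun t : ℝ => (∫ s in (0:ℝ)..t, ((k:ℝ) * s ^ (k-1)) * φ s) / t ^ (k+1))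
        atTop (nhds ((k:ℝ) * ω / (k+1))) := by
      rcases Nat.eq_zero_or_pos k with rfl | hk
      · simpa using (tendsto_const_nhds : Tendsto (fun _ : ℝ => (0:ℝ)) atTop (nhds 0))
      · have h0 := lemB k hk φ ω A M (abs_nonneg _) hM hφc hφb hφω
        have h2 := h0.const_mul (k:ℝ)
        rw [mul_div_assoc]
        apply h2.congr'
        filter_upwards with t
        rw [← mul_div_assoc, ← intervalIntegral.integral_const_mul]
        congr 1
        apply intervalIntegral.integral_congr
        intro s _
        simp only []
        ring
    have hcomb := (ha.sub hb).sub hc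
    have hval : ω - 0 - (k:ℝ) * ω / (k+1) = ω / (k+1) := by
      field_simp
      ring
    rw [hval] at hcomb
    apply hcomb.congr'
    filter_upwards with t
    have : (∫ s in (0:ℝ)..t, ψ s * s ^ k) = ∫ s in (0:ℝ)..t, s ^ k * ψ s := by
      apply intervalIntegral.integral_congr; intro s _; ring
    rw [this, hparts t]
    rw [sub_div, sub_div]
  -- part 2 : error term
  set e : ℝ → ℝ := fun s => g s - c * s ^ k with he
  have hec : ContinuousOn e (Set.Ici 0) :=
    hg.sub (Continuous.continuousOn (by continuity))
  have heB : ∀ s, 0 ≤ s → |e s| ≤ (B + |c|) * s ^ k := by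
    intro s hs
    have h1 := hgB s hs
    have h2 : |c * s ^ k| = |c| * s ^ k := by
      rw [abs_mul, abs_pow, abs_of_nonneg hs]
    calc |g s - c * s ^ k| ≤ |g s| + |c * s ^ k| := abs_sub _ _
      _ ≤ B * s ^ k + |c| * s ^ k := by rw [h2]; linarith
      _ = (B + |c|) * s ^ k := by ring
  have he0 : Tendsto (fun s => e s / s ^ k) atTop (nhds 0) := by
    have h1 := hgc.sub_const c
    rw [sub_self] at h1
    apply h1.congr'
    filter_upwards [eventually_gt_atTop (0:ℝ)] with s hs
    rw [he]
    have hsk : s ^ k ≠ 0 := by positivity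
    field_simp
  have hT2 := lemC k ψ e M (B + |c|) hM (by positivity) hψc hψM hec heB he0
  -- combine
  have hfin := (hT1.const_mul c).add hT2
  rw [add_zero] at hfin
  have hconst : c * (ω / (k+1)) = c * ω / ((k:ℝ)+1) := by ring
  rw [hconst] at hfin
  apply hfin.congr'
  filter_upwards [eventually_ge_atTop (0:ℝ)] with t ht
  have hI1 : IntervalIntegrable (fun s => ψ s * (c * s ^ k)) volume 0 t :=
    (hψc.mul (by continuity)).intervalIntegrable _ _
  have hI2 : IntervalIntegrable (fun s => ψ s * e s) volume 0 t := by
    apply ContinuousOn.intervalIntegrable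
    apply hψc.continuousOn.mul (hec.mono _)
    rw [Set.uIcc_of_le ht]
    exact fun x hx => hx.1
  have hsum : (∫ s in (0:ℝ)..t, ψ s * g s)
      = (∫ s in (0:ℝ)..t, ψ s * (c * s ^ k)) + ∫ s in (0:ℝ)..t, ψ s * e s := by
    rw [← intervalIntegral.integral_add hI1 hI2]
    apply intervalIntegral.integral_congr
    intro s _
    simp only [he]
    ring
  rw [hsum, add_div]
  congr 1
  have hJ : (∫ s in (0:ℝ)..t, ψ s * (c * s ^ k)) = c * ∫ s in (0:ℝ)..t, ψ s * s ^ k := by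
    rw [← intervalIntegral.integral_const_mul]
    apply intervalIntegral.integral_congr
    intro s _
    ring
  rw [hJ, mul_div_assoc]

def Sset (k : ℕ) (t : ℝ) : Set (Fin k → ℝ) :=
  {p | (∀ i, 0 ≤ p i ∧ p i ≤ t) ∧ ∀ i j : Fin k, i ≤ j → p i ≤ p j}

lemma Sset_eq (k : ℕ) (t : ℝ) : Sset k t =
    ((⋂ i, {p : Fin k → ℝ | 0 ≤ p i ∧ p i ≤ t}) ∩
      ⋂ i, ⋂ j, ⋂ (_ : i ≤ j), {p : Fin k → ℝ | p i ≤ p j}) := by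
  ext p
  simp only [Sset, Set.mem_setOf_eq, Set.mem_inter_iff, Set.mem_iInter]

lemma measSset (k : ℕ) (t : ℝ) : MeasurableSet (Sset k t) := by
  rw [Sset_eq]
  refine MeasurableSet.inter (MeasurableSet.iInter fun i => ?_)
    (MeasurableSet.iInter fun i => MeasurableSet.iInter fun j =>
      MeasurableSet.iInter fun _ => ?_)
  · exact (measurableSet_le measurable_const (measurable_pi_apply i)).inter
      (measurableSet_le (measurable_pi_apply i) measurable_const)
  · exact measurableSet_le (measurable_pi_apply i) (measurable_pi_apply j)

lemma Sset_subset_box (k : ℕ) (t : ℝ) :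
    Sset k t ⊆ Set.pi Set.univ (fun _ : Fin k => Set.Icc (0:ℝ) t) := by
  intro p hp
  rw [Set.mem_univ_pi]
  exact fun i => ⟨(hp.1 i).1, (hp.1 i).2⟩

lemma compactSset (k : ℕ) (t : ℝ) : IsCompact (Sset k t) := by
  apply IsCompact.of_isClosed_subset (isCompact_univ_pi fun _ => isCompact_Icc)
    _ (Sset_subset_box k t)
  rw [Sset_eq]
  refine IsClosed.inter (isClosed_iInter fun i => ?_)
    (isClosed_iInter fun i => isClosed_iInter fun j => isClosed_iInter fun _ => ?_)
  · exact (isClosed_le continuous_const (continuous_apply i)).inter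
      (isClosed_le (continuous_apply i) continuous_const)
  · exact isClosed_le (continuous_apply i) (continuous_apply j)

lemma volume_box (k : ℕ) {t : ℝ} (ht : 0 ≤ t) :
    volume (Set.pi Set.univ (fun _ : Fin k => Set.Icc (0:ℝ) t)) = ENNReal.ofReal (t ^ k) := by
  rw [volume_pi_pi]
  simp [Real.volume_Icc, ← ENNReal.ofReal_pow ht]

lemma volSset (k : ℕ) {t : ℝ} (ht : 0 ≤ t) :
    volume (Sset k t) ≤ ENNReal.ofReal (t ^ k) := by
  rw [← volume_box k ht]
  exact measure_mono (Sset_subset_box k t)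

lemma prodBound {k : ℕ} {D : Fin k → ℝ → ℝ} {M : Fin k → ℝ}
    (hDM : ∀ i s, 0 ≤ s → |D i s| ≤ M i)
    {t : ℝ} {p : Fin k → ℝ} (hp : p ∈ Sset k t) :
    |∏ i, D i (p i)| ≤ ∏ i, M i := by
  rw [Finset.abs_prod]
  apply Finset.prod_le_prod (fun i _ => abs_nonneg _)
  intro i _
  exact hDM i (p i) (hp.1 i).1

lemma prodCont {k : ℕ} {D : Fin k → ℝ → ℝ} (hDc : ∀ i, Continuous (D i)) :
    Continuous (fun p : Fin k → ℝ => ∏ i, D i (p i)) := by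
  apply continuous_finset_prod
  intro i _
  exact (hDc i).comp (continuous_apply i)

lemma mInt {k : ℕ} {D : Fin k → ℝ → ℝ} (hDc : ∀ i, Continuous (D i)) (t : ℝ) :
    IntegrableOn (fun p : Fin k → ℝ => ∏ i, D i (p i)) (Sset k t) :=
  (prodCont hDc).continuousOn.integrableOn_compact (compactSset k t)

lemma mBound {k : ℕ} {D : Fin k → ℝ → ℝ} {M : Fin k → ℝ}
    (hDc : ∀ i, Continuous (D i)) (hDM : ∀ i s, 0 ≤ s → |D i s| ≤ M i)
    (hM : ∀ i, 0 ≤ M i) {t : ℝ} (ht : 0 ≤ t) :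
    |∫ p in Sset k t, ∏ i, D i (p i)| ≤ (∏ i, M i) * t ^ k := by
  have h1 : ‖∫ p in Sset k t, ∏ i, D i (p i)‖ ≤ (∏ i, M i) * (volume (Sset k t)).toReal := by
    apply norm_setIntegral_le_of_norm_le_const
    · exact lt_of_le_of_lt (volSset k ht) ENNReal.ofReal_lt_top
    · intro x hx
      rw [Real.norm_eq_abs]
      exact prodBound hDM hx
  rw [Real.norm_eq_abs] at h1
  apply h1.trans
  apply mul_le_mul_of_nonneg_left _ (Finset.prod_nonneg fun i _ => hM i)
  exact ENNReal.toReal_le_of_le_ofReal (by positivity) (volSset k ht)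

lemma mDiff {k : ℕ} {D : Fin k → ℝ → ℝ} {M : Fin k → ℝ}
    (hDc : ∀ i, Continuous (D i)) (hDM : ∀ i s, 0 ≤ s → |D i s| ≤ M i)
    (hM : ∀ i, 0 ≤ M i) {a b : ℝ} (ha : 0 ≤ a) (hab : a ≤ b) :
    |(∫ p in Sset k b, ∏ i, D i (p i)) - ∫ p in Sset k a, ∏ i, D i (p i)|
      ≤ (∏ i, M i) * (b ^ k - a ^ k) := by
  have hb : (0:ℝ) ≤ b := ha.trans hab
  have hsub : Sset k a ⊆ Sset k b := by
    intro p hp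
    exact ⟨fun i => ⟨(hp.1 i).1, (hp.1 i).2.trans hab⟩, hp.2⟩
  have hdiff : (∫ p in Sset k b \ Sset k a, ∏ i, D i (p i))
      = (∫ p in Sset k b, ∏ i, D i (p i)) - ∫ p in Sset k a, ∏ i, D i (p i) :=
    integral_diff (measSset k a) (mInt hDc b) hsub
  have hvol : volume (Sset k b \ Sset k a) ≤ ENNReal.ofReal (b ^ k - a ^ k) := by
    have hsub2 : Sset k b \ Sset k a ⊆
        (Set.pi Set.univ fun _ : Fin k => Set.Icc (0:ℝ) b) \
        (Set.pi Set.univ fun _ : Fin k => Set.Icc (0:ℝ) a) := by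
      rintro p ⟨hpb, hpa⟩
      refine ⟨Sset_subset_box k b hpb, fun hbox => hpa ?_⟩
      rw [Set.mem_univ_pi] at hbox
      exact ⟨fun i => ⟨(hbox i).1, (hbox i).2⟩, hpb.2⟩
    apply (measure_mono hsub2).trans
    rw [measure_diff (fun p hp => by
        rw [Set.mem_univ_pi] at hp ⊢
        exact fun i => ⟨(hp i).1, (hp i).2.trans hab⟩)
      (MeasurableSet.univ_pi fun _ => measurableSet_Icc).nullMeasurableSet
      (by rw [volume_box k ha]; exact ENNReal.ofReal_ne_top)]
    rw [volume_box k ha, volume_box k hb, ← ENNReal.ofReal_sub _ (by positivity)]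
  have h1 : ‖∫ p in Sset k b \ Sset k a, ∏ i, D i (p i)‖
      ≤ (∏ i, M i) * (volume (Sset k b \ Sset k a)).toReal := by
    apply norm_setIntegral_le_of_norm_le_const
    · exact lt_of_le_of_lt hvol ENNReal.ofReal_lt_top
    · intro x hx
      rw [Real.norm_eq_abs]
      exact prodBound hDM hx.1
  rw [hdiff, Real.norm_eq_abs] at h1
  apply h1.trans
  apply mul_le_mul_of_nonneg_left _ (Finset.prod_nonneg fun i _ => hM i)
  apply ENNReal.toReal_le_of_le_ofReal _ hvol
  nlinarith [pow_le_pow_left₀ ha hab k]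

lemma mContOn {k : ℕ} {D : Fin k → ℝ → ℝ} {M : Fin k → ℝ}
    (hDc : ∀ i, Continuous (D i)) (hDM : ∀ i s, 0 ≤ s → |D i s| ≤ M i)
    (hM : ∀ i, 0 ≤ M i) :
    ContinuousOn (fun t => ∫ p in Sset k t, ∏ i, D i (p i)) (Set.Ici 0) := by
  intro x hx
  have hx0 : (0:ℝ) ≤ x := hx
  rw [ContinuousWithinAt, tendsto_iff_norm_sub_tendsto_zero]
  have hg : Tendsto (fun y => (∏ i, M i) * |y ^ k - x ^ k|) (nhdsWithin x (Set.Ici 0))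
      (nhds 0) := by
    have hcont : ContinuousWithinAt (fun y => (∏ i, M i) * |y ^ k - x ^ k|) (Set.Ici 0) x := by
      apply ContinuousWithinAt.mul continuousWithinAt_const
      apply ContinuousWithinAt.abs
      exact ((continuous_pow k).continuousWithinAt).sub continuousWithinAt_const
    rw [ContinuousWithinAt] at hcont
    simpa using hcont
  apply squeeze_zero_norm' _ hg
  filter_upwards [self_mem_nhdsWithin] with y hy
  have hy0 : (0:ℝ) ≤ y := hy
  rcases le_total x y with h | h
  · rw [norm_norm, Real.norm_eq_abs]
    have h2 := mDiff hDc hDM hM hx0 h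
    have habs : |y ^ k - x ^ k| = y ^ k - x ^ k := by
      rw [abs_of_nonneg]
      nlinarith [pow_le_pow_left₀ hx0 h k]
    rw [habs]
    exact h2
  · rw [norm_norm, Real.norm_eq_abs, abs_sub_comm]
    have h2 := mDiff hDc hDM hM hy0 h
    have habs : |y ^ k - x ^ k| = x ^ k - y ^ k := by
      rw [abs_of_nonpos]
      · ring
      nlinarith [pow_le_pow_left₀ hy0 h k]
    rw [habs]
    exact h2

lemma snoc_mem_iff {k : ℕ} {t s : ℝ} {q : Fin k → ℝ} :
    Fin.snoc q s ∈ Sset (k+1) t ↔ (0 ≤ s ∧ s ≤ t) ∧ q ∈ Sset k s := by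
  constructor
  · rintro ⟨hb, hm⟩
    have hlast := hb (Fin.last k)
    rw [Fin.snoc_last] at hlast
    refine ⟨hlast, ⟨fun j => ?_, fun i j hij => ?_⟩⟩
    · have h1 := (hb j.castSucc).1
      have h2 := hm j.castSucc (Fin.last k) (Fin.le_last _)
      rw [Fin.snoc_castSucc] at h1
      rw [Fin.snoc_castSucc, Fin.snoc_last] at h2
      exact ⟨h1, h2⟩
    · have h3 := hm i.castSucc j.castSucc (by rwa [Fin.castSucc_le_castSucc_iff])
      rwa [Fin.snoc_castSucc, Fin.snoc_castSucc] at h3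
  · rintro ⟨⟨hs0, hst⟩, hq⟩
    constructor
    · intro i
      rcases Fin.eq_castSucc_or_eq_last i with ⟨j, rfl⟩ | rfl
      · rw [Fin.snoc_castSucc]
        exact ⟨(hq.1 j).1, (hq.1 j).2.trans hst⟩
      · rw [Fin.snoc_last]
        exact ⟨hs0, hst⟩
    · intro i j hij
      rcases Fin.eq_castSucc_or_eq_last j with ⟨j', rfl⟩ | rfl
      · rcases Fin.eq_castSucc_or_eq_last i with ⟨i', rfl⟩ | rfl
        · rw [Fin.snoc_castSucc, Fin.snoc_castSucc]
          exact hq.2 i' j' (by rwa [Fin.castSucc_le_castSucc_iff] at hij)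
        · exact absurd hij (not_le.mpr (Fin.castSucc_lt_last j'))
      · rw [Fin.snoc_last]
        rcases Fin.eq_castSucc_or_eq_last i with ⟨i', rfl⟩ | rfl
        · rw [Fin.snoc_castSucc]
          exact (hq.1 i').2
        · rw [Fin.snoc_last]

lemma snoc_prod {k : ℕ} (D : Fin (k+1) → ℝ → ℝ) (q : Fin k → ℝ) (s : ℝ) :
    ∏ i, D i ((Fin.snoc q s : Fin (k+1) → ℝ) i)
      = (∏ j : Fin k, D j.castSucc (q j)) * D (Fin.last k) s := by
  rw [Fin.prod_univ_castSucc]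
  simp

lemma mFubini {k : ℕ} {D : Fin (k+1) → ℝ → ℝ} (hDc : ∀ i, Continuous (D i))
    {t : ℝ} (ht : 0 ≤ t) :
    (∫ p in Sset (k+1) t, ∏ i, D i (p i))
      = ∫ s in (0:ℝ)..t,
          D (Fin.last k) s * ∫ q in Sset k s, ∏ j : Fin k, D j.castSucc (q j) := by
  set f : (Fin (k+1) → ℝ) → ℝ :=
    (Sset (k+1) t).indicator (fun p => ∏ i, D i (p i)) with hf
  have h0 : (∫ p in Sset (k+1) t, ∏ i, D i (p i)) = ∫ p, f p :=
    (MeasureTheory.integral_indicator (measSset _ _)).symm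
  set e := MeasurableEquiv.piFinSuccAbove (fun _ : Fin (k+1) => ℝ) (Fin.last k) with he
  have hmp : MeasurePreserving e.symm
      ((volume : Measure ℝ).prod (volume : Measure (Fin k → ℝ))) volume :=
    (volume_preserving_piFinSuccAbove (fun _ : Fin (k+1) => ℝ) (Fin.last k)).symm
  have hsymm : ∀ (s : ℝ) (q : Fin k → ℝ), e.symm (s, q) = Fin.snoc q s := by
    intro s q
    have h : e.symm (s, q) = Fin.insertNth (Fin.last k) s q := rfl
    rw [h, Fin.insertNth_last']
  have h1 : ∫ p, f p = ∫ z : ℝ × (Fin k → ℝ), f (e.symm z)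
      ∂((volume : Measure ℝ).prod (volume : Measure (Fin k → ℝ))) :=
    (hmp.integral_comp' f).symm
  have hfi : Integrable f volume :=
    (integrable_indicator_iff (measSset _ _)).mpr (mInt hDc t)
  have hint : Integrable (fun z : ℝ × (Fin k → ℝ) => f (e.symm z))
      ((volume : Measure ℝ).prod (volume : Measure (Fin k → ℝ))) :=
    (hmp.integrable_comp_emb e.symm.measurableEmbedding).mpr hfi
  have h2 : ∫ z : ℝ × (Fin k → ℝ), f (e.symm z)
        ∂((volume : Measure ℝ).prod (volume : Measure (Fin k → ℝ)))
      = ∫ s : ℝ, ∫ q : Fin k → ℝ, f (e.symm (s, q)) := integral_prod _ hint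
  have h3 : ∀ s : ℝ, (∫ q : Fin k → ℝ, f (e.symm (s, q)))
      = (Set.Icc 0 t).indicator
          (fun s => D (Fin.last k) s * ∫ q in Sset k s, ∏ j : Fin k, D j.castSucc (q j)) s := by
    intro s
    by_cases hs : s ∈ Set.Icc (0:ℝ) t
    · rw [Set.indicator_of_mem hs]
      have hpt : ∀ q : Fin k → ℝ, f (e.symm (s, q)) =
          (Sset k s).indicator
            (fun q => (∏ j : Fin k, D j.castSucc (q j)) * D (Fin.last k) s) q := by
        intro q
        rw [hsymm, hf]
        by_cases hq : q ∈ Sset k s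
        · rw [Set.indicator_of_mem (snoc_mem_iff.mpr ⟨⟨hs.1, hs.2⟩, hq⟩),
            Set.indicator_of_mem hq, snoc_prod]
        · rw [Set.indicator_of_notMem (fun hmem => hq (snoc_mem_iff.mp hmem).2),
            Set.indicator_of_notMem hq]
      calc (∫ q : Fin k → ℝ, f (e.symm (s, q)))
          = ∫ q : Fin k → ℝ, (Sset k s).indicator
              (fun q => (∏ j : Fin k, D j.castSucc (q j)) * D (Fin.last k) s) q :=
            integral_congr_ae (Filter.Eventually.of_forall hpt)
        _ = ∫ q in Sset k s, (∏ j : Fin k, D j.castSucc (q j)) * D (Fin.last k) s :=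
            MeasureTheory.integral_indicator (measSset k s)
        _ = (∫ q in Sset k s, ∏ j : Fin k, D j.castSucc (q j)) * D (Fin.last k) s :=
            integral_mul_const _ _
        _ = D (Fin.last k) s * ∫ q in Sset k s, ∏ j : Fin k, D j.castSucc (q j) :=
            mul_comm _ _
    · rw [Set.indicator_of_notMem hs]
      have hpt : ∀ q : Fin k → ℝ, f (e.symm (s, q)) = 0 := by
        intro q
        rw [hsymm, hf]
        apply Set.indicator_of_notMem
        intro hmem
        exact hs ⟨(snoc_mem_iff.mp hmem).1.1, (snoc_mem_iff.mp hmem).1.2⟩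
      simp [hpt]
  rw [h0, h1, h2]
  rw [integral_congr_ae (Filter.Eventually.of_forall h3)]
  rw [MeasureTheory.integral_indicator measurableSet_Icc,
    MeasureTheory.integral_Icc_eq_integral_Ioc,
    ← intervalIntegral.integral_of_le ht]

lemma globalBound (φ : ℝ → ℝ) (h1 : ContDiff ℝ 1 φ)
    (h2 : ∃ M, ∀ s ≥ (1:ℝ), |deriv φ s| ≤ M) :
    ∃ M, 0 ≤ M ∧ ∀ s, 0 ≤ s → |deriv φ s| ≤ M := by
  obtain ⟨M1, hM1⟩ := h2
  have hc : Continuous (deriv φ) := h1.continuous_deriv le_rfl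
  obtain ⟨C, hC⟩ := (isCompact_Icc (a := (0:ℝ)) (b := 1)).exists_bound_of_continuousOn
    hc.continuousOn
  refine ⟨max (max M1 C) 0, le_max_right _ _, fun s hs => ?_⟩
  rcases le_total s 1 with h | h
  · have := hC s ⟨hs, h⟩
    rw [Real.norm_eq_abs] at this
    exact this.trans ((le_max_right M1 C).trans (le_max_left _ _))
  · exact (hM1 s h).trans ((le_max_left M1 C).trans (le_max_left _ _))

theorem mainAux (k : ℕ) : ∀ (φ : Fin k → ℝ → ℝ) (ω : Fin k → ℝ),
    (∀ i, ContDiff ℝ 1 (φ i)) →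
    (∀ i, ∃ M, ∀ s ≥ (1:ℝ), |deriv (φ i) s| ≤ M) →
    (∀ i, Tendsto (fun t => φ i t / t) atTop (nhds (ω i))) →
    Tendsto (fun t : ℝ => (∫ p in Sset k t, ∏ i, deriv (φ i) (p i)) / t ^ k)
      atTop (nhds ((∏ i, ω i) / Nat.factorial k)) := by
  induction k with
  | zero =>
    intro φ ω _ _ _
    have h1 : ∀ t : ℝ, (∫ p in Sset 0 t, ∏ i, deriv (φ i) (p i)) = 1 := by
      intro t
      have huniv : Sset 0 t = Set.univ := by
        ext p
        simp [Sset]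
      rw [huniv, Measure.restrict_univ]
      have : (fun p : Fin 0 → ℝ => ∏ i, deriv (φ i) (p i)) = fun _ => (1:ℝ) := by
        funext p
        simp
      rw [this, MeasureTheory.integral_const, smul_eq_mul, mul_one]
      have : (volume : Measure (Fin 0 → ℝ)) Set.univ = 1 := by
        rw [← Set.pi_univ Set.univ, volume_pi_pi]
        simp
      rw [measureReal_def, this]
      simp
    simp only [h1]
    simp
  | succ k IH =>
    intro φ ω hC1 hbdd hasymp
    have hMex := fun i => globalBound (φ i) (hC1 i) (hbdd i)
    choose M hM0 hMb using hMex
    have hDc : ∀ i, Continuous (deriv (φ i)) := fun i => (hC1 i).continuous_deriv le_rfl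
    set g : ℝ → ℝ := fun s => ∫ q in Sset k s, ∏ j : Fin k, deriv (φ j.castSucc) (q j)
      with hg
    have hDc' : ∀ j : Fin k, Continuous (fun s => deriv (φ j.castSucc) s) :=
      fun j => hDc j.castSucc
    have hDM' : ∀ (j : Fin k) s, 0 ≤ s → |deriv (φ j.castSucc) s| ≤ M j.castSucc :=
      fun j s hs => hMb j.castSucc s hs
    have hM0' : ∀ j : Fin k, 0 ≤ M j.castSucc := fun j => hM0 j.castSucc
    have hIH := IH (fun j => φ j.castSucc) (fun j => ω j.castSucc)
      (fun j => hC1 j.castSucc) (fun j => hbdd j.castSucc) (fun j => hasymp j.castSucc)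
    have hkey := keyLem k (deriv (φ (Fin.last k))) (φ (Fin.last k)) g
      (ω (Fin.last k)) ((∏ j : Fin k, ω j.castSucc) / Nat.factorial k)
      (M (Fin.last k)) (∏ j : Fin k, M j.castSucc)
      (hM0 _) (Finset.prod_nonneg fun j _ => hM0' j)
      (hDc _) (fun s hs => hMb _ s hs)
      (fun s => ((hC1 _).differentiable one_ne_zero).differentiableAt.hasDerivAt)
      (hasymp _)
      (mContOn hDc' hDM' hM0')
      (fun s hs => mBound hDc' hDM' hM0' hs)
      hIH
    have hconst : (∏ j : Fin k, ω j.castSucc) / Nat.factorial k * ω (Fin.last k) / (k+1)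
        = (∏ i : Fin (k+1), ω i) / Nat.factorial (k+1) := by
      rw [Fin.prod_univ_castSucc, Nat.factorial_succ]
      have h1 : (Nat.factorial k : ℝ) ≠ 0 := Nat.cast_ne_zero.mpr (Nat.factorial_ne_zero k)
      have h2 : ((k:ℝ) + 1) ≠ 0 := by positivity
      push_cast
      rw [div_mul_eq_mul_div, div_div, mul_comm ((Nat.factorial k : ℝ))]
    rw [hconst] at hkey
    apply hkey.congr'
    filter_upwards [eventually_ge_atTop (0:ℝ)] with t ht
    congr 1
    exact (mFubini hDc ht).symm

/-- Asymptotics of the `k`-fold simplex integral of a product of derivatives: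
`m_k(t)/t^k → (ω₁⋯ω_k)/k!`. -/
theorem simplex_iterated_integral_asymptotics (k : ℕ)
    (φ : Fin k → ℝ → ℝ) (ω : Fin k → ℝ)
    (hC1 : ∀ i, ContDiff ℝ 1 (φ i))
    (hbdd : ∀ i, ∃ M, ∀ s ≥ (1:ℝ), |deriv (φ i) s| ≤ M)
    (hasymp : ∀ i, Tendsto (fun t => φ i t / t) atTop (nhds (ω i))) :
    Tendsto (fun t : ℝ =>
        (∫ p in {p : Fin k → ℝ |
            (∀ i, 0 ≤ p i ∧ p i ≤ t) ∧ ∀ i j : Fin k, i ≤ j → p i ≤ p j},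
          ∏ i, deriv (φ i) (p i)) / t ^ k)
      atTop (nhds ((∏ i, ω i) / Nat.factorial k)) :=
  mainAux k φ ω hC1 hbdd hasymp
end
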